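/- Let (A, B, C, i^*, i_*, i^!, j_!, j^*, j_*) be a recollement of triangulated categories and let V be a thick subcategory of B such that i_*A ∈ V for every object A of A; let j^*V denote the full subcategory of C of objects isomorphic to j^*V for some V ∈ V. Then the functors i_*, i^*, i^!, j_!, j^*, j_* restrict to functors between A, V and j^*V, and these restrictions (i^*|_V, i_*|_A : A → V, i^!|_V : V → A, j_!|_{j^*V}, j^*|_V : V → j^*V, j_*|_{j^*V} : j^*V → V) again satisfy the axioms (R1)–(R5) of a recollement, so that (A, V, j^*V) is a recollement of triangulated categories (V and j^*V being triangulated via the thick-subcategory structure). -/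

import Mathlib

open CategoryTheory Limits Pretriangulated

namespace Paper

section Defs

variable (B : Type*) [Category B] [HasZeroObject B] [Preadditive B] [HasShift B ℤ]
  [∀ n : ℤ, (shiftFunctor B n).Additive] [Pretriangulated B]

/-- A thick subcategory of a triangulated category: a full (iso-closed) subcategory,
closed under shifts in both directions, under cones of morphisms, and under
direct summands. -/
structure IsThick (S : Set B) : Prop where
  mem_of_iso : ∀ {X Y : B}, (X ≅ Y) → X ∈ S → Y ∈ S
  shift_mem : ∀ (X : B) (n : ℤ), X ∈ S → X⟦n⟧ ∈ S
  mem_of_dist : ∀ T : Triangle B, (T ∈ distTriang B) → T.obj₁ ∈ S → T.obj₂ ∈ S → T.obj₃ ∈ S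
  mem_of_retract : ∀ (X Y : B) (s : X ⟶ Y) (r : Y ⟶ X), s ≫ r = 𝟙 X → Y ∈ S → X ∈ S

/-- `X^∧_{n-1}`: here `hatAux X 0 = X^∧_{-1}` consists of the zero objects, and
`hatAux X (n+1) = X^∧_n` consists of the objects `Z` admitting a distinguished triangle
`D → D' → Z → ΣD` with `D ∈ X^∧_{n-1}` and `D' ∈ X`. -/
def hatAux (X : Set B) : ℕ → Set B
  | 0 => {Z | IsZero Z}
  | n + 1 => {Z | ∃ T : Triangle B, (T ∈ distTriang B) ∧ T.obj₁ ∈ hatAux X n ∧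
      T.obj₂ ∈ X ∧ Nonempty (T.obj₃ ≅ Z)}

/-- `X^∧ = ∪_{n ≥ 0} X^∧_n`. -/
def hatSet (X : Set B) : Set B := ⋃ n : ℕ, hatAux B X (n + 1)

/-- `X^∨_{n-1}`: here `veeAux X 0 = X^∨_{-1}` consists of the zero objects, and
`veeAux X (n+1) = X^∨_n` consists of the objects `Z` admitting a distinguished triangle
`Z → D → D' → ΣZ` with `D ∈ X` and `D' ∈ X^∨_{n-1}`. -/
def veeAux (X : Set B) : ℕ → Set B
  | 0 => {Z | IsZero Z}
  | n + 1 => {Z | ∃ T : Triangle B, (T ∈ distTriang B) ∧ Nonempty (T.obj₁ ≅ Z) ∧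
      T.obj₂ ∈ X ∧ T.obj₃ ∈ veeAux X n}

/-- `X^∨ = ∪_{n ≥ 0} X^∨_n`. -/
def veeSet (X : Set B) : Set B := ⋃ n : ℕ, veeAux B X (n + 1)

/-- A silting subcategory: an iso-closed full subcategory `M` with `M = add M`
(additive and closed under direct summands), `Hom(X, Y⟦k⟧) = 0` for all `X, Y ∈ M` and
`k ≥ 1`, and whose smallest containing thick subcategory is the whole category. -/
structure IsSilting [HasBinaryBiproducts B] (M : Set B) : Prop where
  mem_of_iso : ∀ {X Y : B}, (X ≅ Y) → X ∈ M → Y ∈ M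
  zero_mem : ∀ X : B, IsZero X → X ∈ M
  sum_mem : ∀ X Y : B, X ∈ M → Y ∈ M → (X ⊞ Y) ∈ M
  mem_of_retract : ∀ (X Y : B) (s : X ⟶ Y) (r : Y ⟶ X), s ≫ r = 𝟙 X → Y ∈ M → X ∈ M
  orth : ∀ X ∈ M, ∀ Y ∈ M, ∀ k : ℤ, 1 ≤ k → ∀ f : X ⟶ Y⟦k⟧, f = 0
  thick_gen : ∀ X : B, ∀ S : Set B, IsThick B S → M ⊆ S → X ∈ S

/-- `add M`: the direct summands (retracts) of finite direct sums of copies of `M`. -/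
def addSet [HasFiniteBiproducts B] (M : B) : Set B :=
  {X | ∃ (n : ℕ) (s : X ⟶ ⨁ fun (_ : Fin n) => M) (r : (⨁ fun (_ : Fin n) => M) ⟶ X),
    s ≫ r = 𝟙 X}

/-- A bounded hereditary cotorsion pair `(T, F)` in a triangulated category. -/
structure IsBddHeredCotorsionPair (T F : Set B) : Prop where
  t_mem_of_iso : ∀ {X Y : B}, (X ≅ Y) → X ∈ T → Y ∈ T
  f_mem_of_iso : ∀ {X Y : B}, (X ≅ Y) → X ∈ F → Y ∈ F
  t_mem_of_retract : ∀ (X Y : B) (s : X ⟶ Y) (r : Y ⟶ X), s ≫ r = 𝟙 X → Y ∈ T → X ∈ T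
  f_mem_of_retract : ∀ (X Y : B) (s : X ⟶ Y) (r : Y ⟶ X), s ≫ r = 𝟙 X → Y ∈ F → X ∈ F
  orth : ∀ X ∈ T, ∀ Y ∈ F, ∀ k : ℤ, 1 ≤ k → ∀ f : X ⟶ Y⟦k⟧, f = 0
  tri₁ : ∀ X : B, ∃ (Fx Tx : B) (_ : Fx ∈ F) (_ : Tx ∈ T) (f : Fx ⟶ Tx) (g : Tx ⟶ X)
    (h : X ⟶ Fx⟦(1 : ℤ)⟧), Triangle.mk f g h ∈ distTriang B
  tri₂ : ∀ X : B, ∃ (Fx Tx : B) (_ : Fx ∈ F) (_ : Tx ∈ T) (f : X ⟶ Fx) (g : Fx ⟶ Tx)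
    (h : Tx ⟶ X⟦(1 : ℤ)⟧), Triangle.mk f g h ∈ distTriang B
  bounded_t : hatSet B T = Set.univ
  bounded_f : veeSet B F = Set.univ

end Defs

/-- The iso-closed image of a full subcategory under a functor. -/
def imgSet {X Y : Type*} [Category X] [Category Y] (F : X ⥤ Y) (S : Set X) : Set Y :=
  {y | ∃ x ∈ S, Nonempty (F.obj x ≅ y)}

section Recollement

variable {A : Type*} [Category A] [HasZeroObject A] [Preadditive A] [HasShift A ℤ]
  [∀ n : ℤ, (shiftFunctor A n).Additive] [Pretriangulated A]
variable {B : Type*} [Category B] [HasZeroObject B] [Preadditive B] [HasShift B ℤ]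
  [∀ n : ℤ, (shiftFunctor B n).Additive] [Pretriangulated B]
variable {C : Type*} [Category C] [HasZeroObject C] [Preadditive C] [HasShift C ℤ]
  [∀ n : ℤ, (shiftFunctor C n).Additive] [Pretriangulated C]

/-- A recollement of triangulated categories `(A, B, C)`, with functors
`i^* = i_star`, `i_* = i_lower`, `i^! = i_shriek`, `j_! = j_lower`, `j^* = j_star`,
`j_* = j_upper`, satisfying axioms (R1)-(R5). -/
structure Recollement (i_star : B ⥤ A) (i_lower : A ⥤ B) (i_shriek : B ⥤ A)
    (j_lower : C ⥤ B) (j_star : B ⥤ C) (j_upper : C ⥤ B) where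
  adj₁ : i_star ⊣ i_lower
  adj₂ : i_lower ⊣ i_shriek
  adj₃ : j_lower ⊣ j_star
  adj₄ : j_star ⊣ j_upper
  i_lower_full : i_lower.Full
  i_lower_faithful : i_lower.Faithful
  j_lower_full : j_lower.Full
  j_lower_faithful : j_lower.Faithful
  j_upper_full : j_upper.Full
  j_upper_faithful : j_upper.Faithful
  essImage_i_lower : ∀ X : B, i_lower.essImage X ↔ IsZero (j_star.obj X)
  r4 : ∀ X : B, ∃ γ : j_upper.obj (j_star.obj X) ⟶ (i_lower.obj (i_shriek.obj X))⟦(1 : ℤ)⟧,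
    Triangle.mk (adj₂.counit.app X) (adj₄.unit.app X) γ ∈ distTriang B
  r5 : ∀ X : B, ∃ γ : i_lower.obj (i_star.obj X) ⟶ (j_lower.obj (j_star.obj X))⟦(1 : ℤ)⟧,
    Triangle.mk (adj₃.counit.app X) (adj₁.unit.app X) γ ∈ distTriang B

/-- The glued subcategory `T = {B | i^*B ∈ T₁ and j^*B ∈ T₂}`. -/
def gluedT (i_star : B ⥤ A) (j_star : B ⥤ C) (T₁ : Set A) (T₂ : Set C) : Set B :=
  {X | i_star.obj X ∈ T₁ ∧ j_star.obj X ∈ T₂}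

/-- The glued subcategory `F = {B | i^!B ∈ F₁ and j^*B ∈ F₂}`. -/
def gluedF (i_shriek : B ⥤ A) (j_star : B ⥤ C) (F₁ : Set A) (F₂ : Set C) : Set B :=
  {X | i_shriek.obj X ∈ F₁ ∧ j_star.obj X ∈ F₂}

/-- The glued silting subcategory
`M_B = {B | i^*B ∈ M_A^∨, j^*B ∈ M_C^∨, i^!B ∈ M_A^∧, j^*B ∈ M_C^∧}`. -/
def gluedSilting (i_star i_shriek : B ⥤ A) (j_star : B ⥤ C)
    (M_A : Set A) (M_C : Set C) : Set B :=
  {X | i_star.obj X ∈ veeSet A M_A ∧ j_star.obj X ∈ veeSet C M_C ∧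
       i_shriek.obj X ∈ hatSet A M_A ∧ j_star.obj X ∈ hatSet C M_C}

variable (i_star : B ⥤ A) (i_lower : A ⥤ B) (i_shriek : B ⥤ A)
  (j_lower : C ⥤ B) (j_star : B ⥤ C) (j_upper : C ⥤ B)
  [Functor.CommShift i_star ℤ] [Functor.IsTriangulated i_star]
  [Functor.CommShift i_lower ℤ] [Functor.IsTriangulated i_lower]
  [Functor.CommShift i_shriek ℤ] [Functor.IsTriangulated i_shriek]
  [Functor.CommShift j_lower ℤ] [Functor.IsTriangulated j_lower]
  [Functor.CommShift j_star ℤ] [Functor.IsTriangulated j_star]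
  [Functor.CommShift j_upper ℤ] [Functor.IsTriangulated j_upper]

/-- Let `(A, B, C)` be a recollement of triangulated categories and `V` a thick
subcategory of `B` containing `i_* A` for every object of `A`; let `j^* V` be the
iso-closed image of `V` under `j^*` in `C`.  Then the six functors restrict to functors
between `A`, `V` and `j^* V` (in the sense that they commute with the full-subcategory
inclusions up to isomorphism), and these restrictions again satisfy the recollement
axioms (R1)-(R5), where the distinguished triangles of the thick subcategories `V` and
`j^* V` are those triangles whose image in the ambient category `B` is distinguished. -/
theorem restricted_recollement
    (R : Recollement i_star i_lower i_shriek j_lower j_star j_upper)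
    (V : Set B) (hV : IsThick B V) (hA : ∀ a : A, i_lower.obj a ∈ V) :
    ∃ (iStar' : ObjectProperty.FullSubcategory (· ∈ V) ⥤ A)
      (iLower' : A ⥤ ObjectProperty.FullSubcategory (· ∈ V))
      (iShriek' : ObjectProperty.FullSubcategory (· ∈ V) ⥤ A)
      (jLower' : ObjectProperty.FullSubcategory (· ∈ imgSet j_star V) ⥤ ObjectProperty.FullSubcategory (· ∈ V))
      (jStar' : ObjectProperty.FullSubcategory (· ∈ V) ⥤ ObjectProperty.FullSubcategory (· ∈ imgSet j_star V))
      (jUpper' : ObjectProperty.FullSubcategory (· ∈ imgSet j_star V) ⥤ ObjectProperty.FullSubcategory (· ∈ V))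
      (adj₁' : iStar' ⊣ iLower') (adj₂' : iLower' ⊣ iShriek')
      (adj₃' : jLower' ⊣ jStar') (adj₄' : jStar' ⊣ jUpper'),
      -- the six functors are restrictions of the original ones
      Nonempty (iStar' ≅ ObjectProperty.ι (· ∈ V) ⋙ i_star) ∧
      Nonempty (iLower' ⋙ ObjectProperty.ι (· ∈ V) ≅ i_lower) ∧
      Nonempty (iShriek' ≅ ObjectProperty.ι (· ∈ V) ⋙ i_shriek) ∧
      Nonempty (jLower' ⋙ ObjectProperty.ι (· ∈ V) ≅
        ObjectProperty.ι (· ∈ imgSet j_star V) ⋙ j_lower) ∧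
      Nonempty (jStar' ⋙ ObjectProperty.ι (· ∈ imgSet j_star V) ≅
        ObjectProperty.ι (· ∈ V) ⋙ j_star) ∧
      Nonempty (jUpper' ⋙ ObjectProperty.ι (· ∈ V) ≅
        ObjectProperty.ι (· ∈ imgSet j_star V) ⋙ j_upper) ∧
      -- (R3): `i_*`, `j_!` and `j_*` are fully faithful
      iLower'.Full ∧ iLower'.Faithful ∧ jLower'.Full ∧ jLower'.Faithful ∧
        jUpper'.Full ∧ jUpper'.Faithful ∧
      -- (R2): the essential image of `i_*` is the kernel of `j^*`
      (∀ X : ObjectProperty.FullSubcategory (· ∈ V), iLower'.essImage X ↔ IsZero (jStar'.obj X)) ∧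
      -- (R4): `i_* i^! X → X → j_* j^* X → Σ(i_* i^! X)` is a distinguished triangle
      (∀ X : ObjectProperty.FullSubcategory (· ∈ V),
        ∃ γ : (ObjectProperty.ι (· ∈ V)).obj (jUpper'.obj (jStar'.obj X)) ⟶
            ((ObjectProperty.ι (· ∈ V)).obj (iLower'.obj (iShriek'.obj X)))⟦(1 : ℤ)⟧,
          Triangle.mk ((ObjectProperty.ι (· ∈ V)).map (adj₂'.counit.app X))
            ((ObjectProperty.ι (· ∈ V)).map (adj₄'.unit.app X)) γ ∈ distTriang B) ∧
      -- (R5): `j_! j^* X → X → i_* i^* X → Σ(j_! j^* X)` is a distinguished triangle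
      (∀ X : ObjectProperty.FullSubcategory (· ∈ V),
        ∃ γ : (ObjectProperty.ι (· ∈ V)).obj (iLower'.obj (iStar'.obj X)) ⟶
            ((ObjectProperty.ι (· ∈ V)).obj (jLower'.obj (jStar'.obj X)))⟦(1 : ℤ)⟧,
          Triangle.mk ((ObjectProperty.ι (· ∈ V)).map (adj₃'.counit.app X))
            ((ObjectProperty.ι (· ∈ V)).map (adj₁'.unit.app X)) γ ∈ distTriang B) := by
  classical
  -- every zero object of `B` lies in `V`
  have hzV : ∀ Z : B, IsZero Z → Z ∈ V := by
    intro Z hZ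
    refine hV.mem_of_retract Z (i_lower.obj (i_star.obj Z)) 0 0 ?_ (hA _)
    rw [zero_comp]
    exact hZ.eq_of_src 0 (𝟙 Z)
  -- `j_! j^* X ∈ V` for `X ∈ V`
  have hjl : ∀ X : B, X ∈ V → j_lower.obj (j_star.obj X) ∈ V := by
    intro X hX
    obtain ⟨γ, hT⟩ := R.r5 X
    have h1 := hV.mem_of_dist _ (rot_of_distTriang _ hT) hX (hA _)
    have h2 := hV.shift_mem _ (-1) h1
    exact hV.mem_of_iso (shiftShiftNeg _ (1 : ℤ)) h2
  -- `j_* j^* X ∈ V` for `X ∈ V`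
  have hju : ∀ X : B, X ∈ V → j_upper.obj (j_star.obj X) ∈ V := by
    intro X hX
    obtain ⟨γ, hT⟩ := R.r4 X
    exact hV.mem_of_dist _ hT (hA _) hX
  -- lifting `IsZero` through the full subcategory inclusions
  have hz₁ : ∀ X : ObjectProperty.FullSubcategory (· ∈ imgSet j_star V), IsZero X.obj → IsZero X := by
    intro X h
    exact ⟨fun Y => ⟨@Equiv.unique _ _ (h.unique_to Y.obj).some
        ((ObjectProperty.fullyFaithfulι (· ∈ imgSet j_star V)).homEquiv (X := X) (Y := Y))⟩,
      fun Y => ⟨@Equiv.unique _ _ (h.unique_from Y.obj).some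
        ((ObjectProperty.fullyFaithfulι (· ∈ imgSet j_star V)).homEquiv (X := Y) (Y := X))⟩⟩
  obtain ⟨Z0, hZ0⟩ := HasZeroObject.zero (C := B)
  have hZ0img : j_star.obj Z0 ∈ imgSet j_star V := ⟨Z0, hzV Z0 hZ0, ⟨Iso.refl _⟩⟩
  have hz₂ : ∀ X : ObjectProperty.FullSubcategory (· ∈ imgSet j_star V), IsZero X → IsZero X.obj := by
    intro X h
    have hW : IsZero (⟨j_star.obj Z0, hZ0img⟩ : ObjectProperty.FullSubcategory (· ∈ imgSet j_star V)) :=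
      hz₁ _ (j_star.map_isZero hZ0)
    have e := h.iso hW
    exact (j_star.map_isZero hZ0).of_iso
      ((ObjectProperty.ι (· ∈ imgSet j_star V)).mapIso e)
  refine ⟨ObjectProperty.ι (· ∈ V) ⋙ i_star,
    ObjectProperty.lift _ i_lower hA,
    ObjectProperty.ι (· ∈ V) ⋙ i_shriek,
    ObjectProperty.lift _ (ObjectProperty.ι (· ∈ imgSet j_star V) ⋙ j_lower)
      (fun Y => by
        obtain ⟨v, hv, ⟨e⟩⟩ := Y.property
        exact hV.mem_of_iso (j_lower.mapIso e) (hjl v hv)),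
    ObjectProperty.lift _ (ObjectProperty.ι (· ∈ V) ⋙ j_star)
      (fun X => ⟨X.obj, X.property, ⟨Iso.refl _⟩⟩),
    ObjectProperty.lift _ (ObjectProperty.ι (· ∈ imgSet j_star V) ⋙ j_upper)
      (fun Y => by
        obtain ⟨v, hv, ⟨e⟩⟩ := Y.property
        exact hV.mem_of_iso (j_upper.mapIso e) (hju v hv)),
    Adjunction.mkOfHomEquiv
      ⟨fun X a => (R.adj₁.homEquiv X.obj a).trans ⟨fun f => ObjectProperty.homMk f, fun g => g.hom, fun _ => rfl, fun _ => rfl⟩,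
        fun f g => R.adj₁.homEquiv_naturality_left_symm f.hom g.hom,
        fun f g => by ext; exact R.adj₁.homEquiv_naturality_right f g⟩,
    Adjunction.mkOfHomEquiv
      ⟨fun a X => (ObjectProperty.fullyFaithfulι (· ∈ V)).homEquiv.trans (R.adj₂.homEquiv a X.obj),
        fun f g => by ext; exact R.adj₂.homEquiv_naturality_left_symm f g,
        fun f g => R.adj₂.homEquiv_naturality_right f.hom g.hom⟩,
    Adjunction.mkOfHomEquiv
      ⟨fun Y X => (ObjectProperty.fullyFaithfulι (· ∈ V)).homEquiv.trans
          ((R.adj₃.homEquiv Y.obj X.obj).trans ⟨fun f => ObjectProperty.homMk f, fun g => g.hom, fun _ => rfl, fun _ => rfl⟩),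
        fun f g => by ext; exact R.adj₃.homEquiv_naturality_left_symm f.hom g.hom,
        fun f g => by ext; exact R.adj₃.homEquiv_naturality_right f.hom g.hom⟩,
    Adjunction.mkOfHomEquiv
      ⟨fun X Y => (ObjectProperty.fullyFaithfulι (· ∈ imgSet j_star V)).homEquiv.trans
          ((R.adj₄.homEquiv X.obj Y.obj).trans ⟨fun f => ObjectProperty.homMk f, fun g => g.hom, fun _ => rfl, fun _ => rfl⟩),
        fun f g => by ext; exact R.adj₄.homEquiv_naturality_left_symm f.hom g.hom,
        fun f g => by ext; exact R.adj₄.homEquiv_naturality_right f.hom g.hom⟩,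
    ⟨Iso.refl _⟩,
    ⟨ObjectProperty.liftCompιIso _ _ _⟩,
    ⟨Iso.refl _⟩,
    ⟨ObjectProperty.liftCompιIso _ _ _⟩,
    ⟨ObjectProperty.liftCompιIso _ _ _⟩,
    ⟨ObjectProperty.liftCompιIso _ _ _⟩,
    ?_, ?_, ?_, ?_, ?_, ?_, ?_, ?_, ?_⟩
  · haveI := R.i_lower_full; infer_instance
  · haveI := R.i_lower_faithful; infer_instance
  · haveI := R.j_lower_full; infer_instance
  · haveI := R.j_lower_faithful; infer_instance
  · haveI := R.j_upper_full; infer_instance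
  · haveI := R.j_upper_faithful; infer_instance
  · -- (R2)
    intro X
    constructor
    · rintro ⟨a, ⟨e⟩⟩
      have e' : i_lower.obj a ≅ X.obj := (ObjectProperty.ι (· ∈ V)).mapIso e
      exact hz₁ _ ((R.essImage_i_lower X.obj).1 ⟨a, ⟨e'⟩⟩)
    · intro h
      obtain ⟨a, ⟨e⟩⟩ := (R.essImage_i_lower X.obj).2 (hz₂ _ h)
      exact ⟨a, ⟨ObjectProperty.isoMk _ e⟩⟩
  · -- (R4)
    intro X
    obtain ⟨γ, hT⟩ := R.r4 X.obj
    refine ⟨γ, ?_⟩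
    convert hT using 2
    · rfl
    · rfl
    · rfl
    · exact R.adj₂.homEquiv_symm_id X.obj
    · exact R.adj₄.homEquiv_id X.obj
  · -- (R5)
    intro X
    obtain ⟨γ, hT⟩ := R.r5 X.obj
    refine ⟨γ, ?_⟩
    convert hT using 2
    · rfl
    · rfl
    · rfl
    · exact R.adj₃.homEquiv_symm_id X.obj
    · exact R.adj₁.homEquiv_id X.obj

end Recollement

end Paper
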